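/- Suppose α ∈ Ω¹ satisfies P₁(f, α) = 0 for all f ∈ A (i.e. α is contravariantly constant, {f,α} = 0). Then for all f, g ∈ A one has P₁₁(f·d₀g, α) = −f·P₂(g, d₁α). Consequently, for every β ∈ Ω¹ that is a finite sum Σᵢ fᵢ·d₀gᵢ, the bracket of β with α is {β,α} = −Σᵢ fᵢ·P₂(gᵢ, d₁α), the negative of the contravariant derivative of d₁α along β. (Key step in the computation of the metacurvature of a symplectic manifold, Theorem 'symplectic.M'.) -/
import Mathlib


/-- If `α` is contravariantly constant (`P₁(f,α) = 0` for all `f`), then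
`P₁₁(f • d₀g, α) = −f • P₂(g, d₁α)`, and consequently for every 1-form `β = Σᵢ fᵢ • d₀gᵢ`
the bracket with `α` is `{β,α} = −Σᵢ fᵢ • P₂(gᵢ, d₁α)`, the negative of the contravariant
derivative of `d₁α` along `β`. -/
theorem bracket_with_constant_form
    {A : Type*} [CommRing A]
    {Ω1 Ω2 : Type*} [AddCommGroup Ω1] [Module A Ω1] [AddCommGroup Ω2] [Module A Ω2]
    (w : Ω1 →ₗ[A] Ω1 →ₗ[A] Ω2)
    (d0 : A →+ Ω1) (hd0 : ∀ f g : A, d0 (f * g) = f • d0 g + g • d0 f)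
    (d1 : Ω1 →+ Ω2) (hd1d0 : ∀ f : A, d1 (d0 f) = 0)
    (P0 : A →+ A →+ A) (P1 : A →+ Ω1 →+ Ω1)
    (P11 : Ω1 →+ Ω1 →+ Ω2) (P2 : A →+ Ω2 →+ Ω2)
    (hP0 : ∀ f g h : A, P0 f (g * h) = g * P0 f h + h * P0 f g)
    (hP1L : ∀ (f g : A) (β : Ω1), P1 (f * g) β = f • P1 g β + g • P1 f β)
    (hP1R : ∀ (f g : A) (β : Ω1), P1 f (g • β) = P0 f g • β + g • P1 f β)
    (hP11P : ∀ (f : A) (β γ : Ω1), P11 (f • β) γ = f • P11 β γ + w β (P1 f γ))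
    (hP2L : ∀ (f g : A) (ω : Ω2), P2 f (g • ω) = P0 f g • ω + g • P2 f ω)
    (hP2w : ∀ (f : A) (β γ : Ω1), P2 f (w β γ) = w (P1 f β) γ + w β (P1 f γ))
    (hsymm : ∀ β γ : Ω1, P11 β γ = P11 γ β)
    (hflat : ∀ (f g : A) (β : Ω1), P1 f (P1 g β) - P1 g (P1 f β) = P1 (P0 f g) β)
    (htf : ∀ f g : A, P1 f (d0 g) - P1 g (d0 f) = d0 (P0 f g))
    (hLeib : ∀ (f : A) (β : Ω1), d1 (P1 f β) = P11 (d0 f) β + P2 f (d1 β))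
    (α : Ω1) (hα : ∀ f : A, P1 f α = 0) :
    (∀ f g : A, P11 (f • d0 g) α = -(f • P2 g (d1 α))) ∧
    (∀ (n : ℕ) (F G : Fin n → A),
      P11 (∑ i, F i • d0 (G i)) α = -∑ i, F i • P2 (G i) (d1 α)) := by
  have key : ∀ f g : A, P11 (f • d0 g) α = -(f • P2 g (d1 α)) := by
    intro f g
    have h1 : d1 (P1 g α) = P11 (d0 g) α + P2 g (d1 α) := hLeib g α
    rw [hα g] at h1
    simp only [map_zero] at h1
    have h2 : P11 (d0 g) α = -(P2 g (d1 α)) := by linear_combination (norm := abel) -h1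
    rw [hP11P, hα, map_zero, h2, smul_neg]
    abel
  refine ⟨key, fun n F G => ?_⟩
  have : P11 (∑ i, F i • d0 (G i)) α = ∑ i, P11 (F i • d0 (G i)) α := by
    rw [map_sum]
    simp [AddMonoidHom.finset_sum_apply]
  rw [this]
  simp only [key]
  rw [← Finset.sum_neg_distrib]
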